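/- arXiv:1202.6021 — 2 statements merged into one kernel-verified Lean document; each statement's English description precedes it below -/
import Mathlib

section
/- Every ℝ-linear map f : ℍ → ℍ has a unique expansion f(x) = a₀·x + a₁·I(x) + a₂·J(x) + a₃·K(x) for all x ∈ ℍ, where a₀, a₁, a₂, a₃ are quaternions multiplied on the left, I(x) = i x i⁻¹, J(x) = j x j⁻¹, and K(x) = k x k⁻¹. -/
open Quaternion Matrix
set_option maxHeartbeats 1000000

noncomputable def quatBasis : Module.Basis (Fin 4) ℝ ℍ[ℝ] :=
  QuaternionAlgebra.basisOneIJK (-1 : ℝ) 0 (-1)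

noncomputable def qi : ℍ[ℝ] := ⟨0, 1, 0, 0⟩
noncomputable def qj : ℍ[ℝ] := ⟨0, 0, 1, 0⟩
noncomputable def qk : ℍ[ℝ] := ⟨0, 0, 0, 1⟩

noncomputable def qmk (a b c d : ℝ) : ℍ[ℝ] := ⟨a, b, c, d⟩
@[simp] lemma qmk_re (a b c d : ℝ) : (qmk a b c d).re = a := rfl
@[simp] lemma qmk_imI (a b c d : ℝ) : (qmk a b c d).imI = b := rfl
@[simp] lemma qmk_imJ (a b c d : ℝ) : (qmk a b c d).imJ = c := rfl
@[simp] lemma qmk_imK (a b c d : ℝ) : (qmk a b c d).imK = d := rfl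

@[simp] lemma qi_re : qi.re = 0 := rfl
@[simp] lemma qi_imI : qi.imI = 1 := rfl
@[simp] lemma qi_imJ : qi.imJ = 0 := rfl
@[simp] lemma qi_imK : qi.imK = 0 := rfl
@[simp] lemma qj_re : qj.re = 0 := rfl
@[simp] lemma qj_imI : qj.imI = 0 := rfl
@[simp] lemma qj_imJ : qj.imJ = 1 := rfl
@[simp] lemma qj_imK : qj.imK = 0 := rfl
@[simp] lemma qk_re : qk.re = 0 := rfl
@[simp] lemma qk_imI : qk.imI = 0 := rfl
@[simp] lemma qk_imJ : qk.imJ = 0 := rfl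
@[simp] lemma qk_imK : qk.imK = 1 := rfl

lemma qi_inv : qi⁻¹ = -qi := by
  apply inv_eq_of_mul_eq_one_right; ext <;> simp

lemma qj_inv : qj⁻¹ = -qj := by
  apply inv_eq_of_mul_eq_one_right; ext <;> simp

lemma qk_inv : qk⁻¹ = -qk := by
  apply inv_eq_of_mul_eq_one_right; ext <;> simp

lemma conjI (x : ℍ[ℝ]) : qi * x * qi⁻¹ = qmk x.re x.imI (-x.imJ) (-x.imK) := by
  rw [qi_inv]; ext <;> simp

lemma conjJ (x : ℍ[ℝ]) : qj * x * qj⁻¹ = qmk x.re (-x.imI) x.imJ (-x.imK) := by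
  rw [qj_inv]; ext <;> simp

lemma conjK (x : ℍ[ℝ]) : qk * x * qk⁻¹ = qmk x.re (-x.imI) (-x.imJ) x.imK := by
  rw [qk_inv]; ext <;> simp

lemma decomp (f : ℍ[ℝ] →ₗ[ℝ] ℍ[ℝ]) (x : ℍ[ℝ]) :
    f x = x.re • f 1 + x.imI • f qi + x.imJ • f qj + x.imK • f qk := by
  rw [← _root_.map_smul, ← _root_.map_smul, ← _root_.map_smul, ← _root_.map_smul, ← map_add, ← map_add, ← map_add]
  congr 1
  ext <;> simp

/-- Every ℝ-linear map `f : ℍ → ℍ` has a unique expansion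
`f x = a₀ * x + a₁ * I x + a₂ * J x + a₃ * K x`. -/
theorem stmt11 (f : ℍ[ℝ] →ₗ[ℝ] ℍ[ℝ]) :
    ∃! p : ℍ[ℝ] × ℍ[ℝ] × ℍ[ℝ] × ℍ[ℝ],
      ∀ x : ℍ[ℝ],
        f x = p.1 * x + p.2.1 * (qi * x * qi⁻¹) + p.2.2.1 * (qj * x * qj⁻¹)
          + p.2.2.2 * (qk * x * qk⁻¹) := by
  set c0 : ℍ[ℝ] := f 1 with hc0
  set c1 : ℍ[ℝ] := f qi * qi⁻¹ with hc1
  set c2 : ℍ[ℝ] := f qj * qj⁻¹ with hc2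
  set c3 : ℍ[ℝ] := f qk * qk⁻¹ with hc3
  refine ⟨((4:ℝ)⁻¹ • (c0 + c1 + c2 + c3), (4:ℝ)⁻¹ • (c0 + c1 - c2 - c3),
    (4:ℝ)⁻¹ • (c0 - c1 + c2 - c3), (4:ℝ)⁻¹ • (c0 - c1 - c2 + c3)), ?_, ?_⟩
  · intro x
    rw [decomp f x, conjI, conjJ, conjK]
    rw [hc1, hc2, hc3, qi_inv, qj_inv, qk_inv] at *
    ext <;> simp [Quaternion.re_mul, Quaternion.imI_mul, Quaternion.imJ_mul, Quaternion.imK_mul] <;> ring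
  · rintro ⟨a, b, c, d⟩ h
    have h1 := h 1
    have hi := h qi
    have hj := h qj
    have hk := h qk
    rw [conjI, conjJ, conjK] at h1 hi hj hk
    have e1 : c0 = a + b + c + d := by
      rw [hc0, h1]; ext <;> simp [Quaternion.re_mul, Quaternion.imI_mul, Quaternion.imJ_mul, Quaternion.imK_mul]
    have e2 : c1 = a + b - c - d := by
      rw [hc1, qi_inv, hi]; ext <;> simp [Quaternion.re_mul, Quaternion.imI_mul, Quaternion.imJ_mul, Quaternion.imK_mul] <;> ring
    have e3 : c2 = a - b + c - d := by
      rw [hc2, qj_inv, hj]; ext <;> simp [Quaternion.re_mul, Quaternion.imI_mul, Quaternion.imJ_mul, Quaternion.imK_mul] <;> ring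
    have e4 : c3 = a - b - c + d := by
      rw [hc3, qk_inv, hk]; ext <;> simp [Quaternion.re_mul, Quaternion.imI_mul, Quaternion.imJ_mul, Quaternion.imK_mul] <;> ring
    simp only [Prod.mk.injEq]
    refine ⟨?_, ?_, ?_, ?_⟩ <;> rw [e1, e2, e3, e4] <;> ext <;> simp <;> ring
end

section
/- The family of ℝ-linear endomorphisms (id, I, J, K) of ℍ, where I(x) = i x i⁻¹, J(x) = j x j⁻¹, K(x) = k x k⁻¹, is a basis of the space of ℝ-linear endomorphisms of ℍ regarded as a left ℍ-module, where a quaternion a acts on an endomorphism f by (a • f)(x) = a · f(x). -/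
open Quaternion Matrix

noncomputable def Imap : ℍ[ℝ] →ₗ[ℝ] ℍ[ℝ] where
  toFun x := qi * x * qi⁻¹
  map_add' x y := by simp [mul_add, add_mul]
  map_smul' r x := by simp [mul_smul_comm, smul_mul_assoc]

noncomputable def Jmap : ℍ[ℝ] →ₗ[ℝ] ℍ[ℝ] where
  toFun x := qj * x * qj⁻¹
  map_add' x y := by simp [mul_add, add_mul]
  map_smul' r x := by simp [mul_smul_comm, smul_mul_assoc]

noncomputable def Kmap : ℍ[ℝ] →ₗ[ℝ] ℍ[ℝ] where
  toFun x := qk * x * qk⁻¹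
  map_add' x y := by simp [mul_add, add_mul]
  map_smul' r x := by simp [mul_smul_comm, smul_mul_assoc]

@[simp] lemma mk_mul_re' (a b c d : ℝ) (x : ℍ[ℝ]) :
    (@HMul.hMul ℍ[ℝ] ℍ[ℝ] ℍ[ℝ] _ ⟨a, b, c, d⟩ x).re = a * x.re - b * x.imI - c * x.imJ - d * x.imK :=
  Quaternion.re_mul _ _
@[simp] lemma mul_mk_re' (a b c d : ℝ) (x : ℍ[ℝ]) :
    (@HMul.hMul ℍ[ℝ] ℍ[ℝ] ℍ[ℝ] _ x ⟨a, b, c, d⟩).re = x.re * a - x.imI * b - x.imJ * c - x.imK * d :=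
  Quaternion.re_mul _ _
@[simp] lemma mk_mul_imI' (a b c d : ℝ) (x : ℍ[ℝ]) :
    (@HMul.hMul ℍ[ℝ] ℍ[ℝ] ℍ[ℝ] _ ⟨a, b, c, d⟩ x).imI = a * x.imI + b * x.re + c * x.imK - d * x.imJ :=
  Quaternion.imI_mul _ _
@[simp] lemma mul_mk_imI' (a b c d : ℝ) (x : ℍ[ℝ]) :
    (@HMul.hMul ℍ[ℝ] ℍ[ℝ] ℍ[ℝ] _ x ⟨a, b, c, d⟩).imI = x.re * b + x.imI * a + x.imJ * d - x.imK * c :=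
  Quaternion.imI_mul _ _
@[simp] lemma mk_mul_imJ' (a b c d : ℝ) (x : ℍ[ℝ]) :
    (@HMul.hMul ℍ[ℝ] ℍ[ℝ] ℍ[ℝ] _ ⟨a, b, c, d⟩ x).imJ = a * x.imJ - b * x.imK + c * x.re + d * x.imI :=
  Quaternion.imJ_mul _ _
@[simp] lemma mul_mk_imJ' (a b c d : ℝ) (x : ℍ[ℝ]) :
    (@HMul.hMul ℍ[ℝ] ℍ[ℝ] ℍ[ℝ] _ x ⟨a, b, c, d⟩).imJ = x.re * c - x.imI * d + x.imJ * a + x.imK * b :=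
  Quaternion.imJ_mul _ _
@[simp] lemma mk_mul_imK' (a b c d : ℝ) (x : ℍ[ℝ]) :
    (@HMul.hMul ℍ[ℝ] ℍ[ℝ] ℍ[ℝ] _ ⟨a, b, c, d⟩ x).imK = a * x.imK + b * x.imJ - c * x.imI + d * x.re :=
  Quaternion.imK_mul _ _
@[simp] lemma mul_mk_imK' (a b c d : ℝ) (x : ℍ[ℝ]) :
    (@HMul.hMul ℍ[ℝ] ℍ[ℝ] ℍ[ℝ] _ x ⟨a, b, c, d⟩).imK = x.re * d + x.imI * c - x.imJ * b + x.imK * a :=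
  Quaternion.imK_mul _ _
@[simp] lemma smul_mk_re' (a b c d : ℝ) (x : ℍ[ℝ]) :
    (@HSMul.hSMul ℍ[ℝ] ℍ[ℝ] ℍ[ℝ] _ x ⟨a, b, c, d⟩).re = x.re * a - x.imI * b - x.imJ * c - x.imK * d :=
  Quaternion.re_mul _ _
@[simp] lemma smul_mk_imI' (a b c d : ℝ) (x : ℍ[ℝ]) :
    (@HSMul.hSMul ℍ[ℝ] ℍ[ℝ] ℍ[ℝ] _ x ⟨a, b, c, d⟩).imI = x.re * b + x.imI * a + x.imJ * d - x.imK * c :=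
  Quaternion.imI_mul _ _
@[simp] lemma smul_mk_imJ' (a b c d : ℝ) (x : ℍ[ℝ]) :
    (@HSMul.hSMul ℍ[ℝ] ℍ[ℝ] ℍ[ℝ] _ x ⟨a, b, c, d⟩).imJ = x.re * c - x.imI * d + x.imJ * a + x.imK * b :=
  Quaternion.imJ_mul _ _
@[simp] lemma smul_mk_imK' (a b c d : ℝ) (x : ℍ[ℝ]) :
    (@HSMul.hSMul ℍ[ℝ] ℍ[ℝ] ℍ[ℝ] _ x ⟨a, b, c, d⟩).imK = x.re * d + x.imI * c - x.imJ * b + x.imK * a :=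
  Quaternion.imK_mul _ _

lemma Imap_eq (x : ℍ[ℝ]) : Imap x = ⟨x.re, x.imI, -x.imJ, -x.imK⟩ := by
  show qi * x * qi⁻¹ = _; rw [qi_inv]; ext <;> simp
lemma Jmap_eq (x : ℍ[ℝ]) : Jmap x = ⟨x.re, -x.imI, x.imJ, -x.imK⟩ := by
  show qj * x * qj⁻¹ = _; rw [qj_inv]; ext <;> simp
lemma Kmap_eq (x : ℍ[ℝ]) : Kmap x = ⟨x.re, -x.imI, -x.imJ, x.imK⟩ := by
  show qk * x * qk⁻¹ = _; rw [qk_inv]; ext <;> simp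

lemma quatBasis_zero : quatBasis 0 = 1 := by
  show (QuaternionAlgebra.basisOneIJK (-1 : ℝ) 0 (-1)) 0 = ⟨1, 0, 0, 0⟩
  rw [QuaternionAlgebra.basisOneIJK, Module.Basis.coe_ofEquivFun]; rfl
lemma quatBasis_one : quatBasis 1 = qi := by
  show (QuaternionAlgebra.basisOneIJK (-1 : ℝ) 0 (-1)) 1 = ⟨0, 1, 0, 0⟩
  rw [QuaternionAlgebra.basisOneIJK, Module.Basis.coe_ofEquivFun]; rfl
lemma quatBasis_two : quatBasis 2 = qj := by
  show (QuaternionAlgebra.basisOneIJK (-1 : ℝ) 0 (-1)) 2 = ⟨0, 0, 1, 0⟩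
  rw [QuaternionAlgebra.basisOneIJK, Module.Basis.coe_ofEquivFun]; rfl
lemma quatBasis_three : quatBasis 3 = qk := by
  show (QuaternionAlgebra.basisOneIJK (-1 : ℝ) 0 (-1)) 3 = ⟨0, 0, 0, 1⟩
  rw [QuaternionAlgebra.basisOneIJK, Module.Basis.coe_ofEquivFun]; rfl

lemma key1 (u0 u1 u2 u3 : ℍ[ℝ]) :
    ((4:ℝ)⁻¹ • (u0 - u1 * qi - u2 * qj - u3 * qk)) * 1
      + ((4:ℝ)⁻¹ • (u0 - u1 * qi + u2 * qj + u3 * qk)) * Imap 1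
      + ((4:ℝ)⁻¹ • (u0 + u1 * qi - u2 * qj + u3 * qk)) * Jmap 1
      + ((4:ℝ)⁻¹ • (u0 + u1 * qi + u2 * qj - u3 * qk)) * Kmap 1 = u0 := by
  rw [Imap_eq, Jmap_eq, Kmap_eq]
  ext <;> simp <;> ring

lemma key2 (u0 u1 u2 u3 : ℍ[ℝ]) :
    ((4:ℝ)⁻¹ • (u0 - u1 * qi - u2 * qj - u3 * qk)) * qi
      + ((4:ℝ)⁻¹ • (u0 - u1 * qi + u2 * qj + u3 * qk)) * Imap qi
      + ((4:ℝ)⁻¹ • (u0 + u1 * qi - u2 * qj + u3 * qk)) * Jmap qi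
      + ((4:ℝ)⁻¹ • (u0 + u1 * qi + u2 * qj - u3 * qk)) * Kmap qi = u1 := by
  rw [Imap_eq, Jmap_eq, Kmap_eq]
  ext <;> simp <;> ring

lemma key3 (u0 u1 u2 u3 : ℍ[ℝ]) :
    ((4:ℝ)⁻¹ • (u0 - u1 * qi - u2 * qj - u3 * qk)) * qj
      + ((4:ℝ)⁻¹ • (u0 - u1 * qi + u2 * qj + u3 * qk)) * Imap qj
      + ((4:ℝ)⁻¹ • (u0 + u1 * qi - u2 * qj + u3 * qk)) * Jmap qj
      + ((4:ℝ)⁻¹ • (u0 + u1 * qi + u2 * qj - u3 * qk)) * Kmap qj = u2 := by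
  rw [Imap_eq, Jmap_eq, Kmap_eq]
  ext <;> simp <;> ring

lemma key4 (u0 u1 u2 u3 : ℍ[ℝ]) :
    ((4:ℝ)⁻¹ • (u0 - u1 * qi - u2 * qj - u3 * qk)) * qk
      + ((4:ℝ)⁻¹ • (u0 - u1 * qi + u2 * qj + u3 * qk)) * Imap qk
      + ((4:ℝ)⁻¹ • (u0 + u1 * qi - u2 * qj + u3 * qk)) * Jmap qk
      + ((4:ℝ)⁻¹ • (u0 + u1 * qi + u2 * qj - u3 * qk)) * Kmap qk = u3 := by
  rw [Imap_eq, Jmap_eq, Kmap_eq]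
  ext <;> simp <;> ring

lemma decomp_s14 (f : ℍ[ℝ] →ₗ[ℝ] ℍ[ℝ]) :
    f = ((4:ℝ)⁻¹ • (f 1 - f qi * qi - f qj * qj - f qk * qk)) • LinearMap.id
      + ((4:ℝ)⁻¹ • (f 1 - f qi * qi + f qj * qj + f qk * qk)) • Imap
      + ((4:ℝ)⁻¹ • (f 1 + f qi * qi - f qj * qj + f qk * qk)) • Jmap
      + ((4:ℝ)⁻¹ • (f 1 + f qi * qi + f qj * qj - f qk * qk)) • Kmap := by
  apply quatBasis.ext
  intro i
  fin_cases i
  · rw [show (⟨0, by omega⟩ : Fin 4) = 0 from rfl, quatBasis_zero]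
    simp only [LinearMap.add_apply, LinearMap.smul_apply, LinearMap.id_apply, smul_eq_mul]
    exact (key1 (f 1) (f qi) (f qj) (f qk)).symm
  · rw [show (⟨1, by omega⟩ : Fin 4) = 1 from rfl, quatBasis_one]
    simp only [LinearMap.add_apply, LinearMap.smul_apply, LinearMap.id_apply, smul_eq_mul]
    exact (key2 (f 1) (f qi) (f qj) (f qk)).symm
  · rw [show (⟨2, by omega⟩ : Fin 4) = 2 from rfl, quatBasis_two]
    simp only [LinearMap.add_apply, LinearMap.smul_apply, LinearMap.id_apply, smul_eq_mul]
    exact (key3 (f 1) (f qi) (f qj) (f qk)).symm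
  · rw [show (⟨3, by omega⟩ : Fin 4) = 3 from rfl, quatBasis_three]
    simp only [LinearMap.add_apply, LinearMap.smul_apply, LinearMap.id_apply, smul_eq_mul]
    exact (key4 (f 1) (f qi) (f qj) (f qk)).symm

lemma indep : LinearIndependent ℍ[ℝ] ![LinearMap.id, Imap, Jmap, Kmap] := by
  rw [Fintype.linearIndependent_iff]
  intro g h
  rw [Fin.sum_univ_four] at h
  have e0 := LinearMap.congr_fun h 1
  have e1 := LinearMap.congr_fun h qi
  have e2 := LinearMap.congr_fun h qj
  have e3 := LinearMap.congr_fun h qk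
  simp only [Matrix.cons_val_zero, Matrix.cons_val_one, Matrix.head_cons, Matrix.cons_val_two,
    Matrix.tail_cons, Matrix.cons_val_three, LinearMap.add_apply, LinearMap.smul_apply,
    LinearMap.id_apply, Imap_eq, Jmap_eq, Kmap_eq, smul_eq_mul, LinearMap.zero_apply] at e0 e1 e2 e3
  have a0 := congrArg QuaternionAlgebra.re e0
  have a1 := congrArg QuaternionAlgebra.imI e0
  have a2 := congrArg QuaternionAlgebra.imJ e0
  have a3 := congrArg QuaternionAlgebra.imK e0
  have b0 := congrArg QuaternionAlgebra.re e1
  have b1 := congrArg QuaternionAlgebra.imI e1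
  have b2 := congrArg QuaternionAlgebra.imJ e1
  have b3 := congrArg QuaternionAlgebra.imK e1
  have c0 := congrArg QuaternionAlgebra.re e2
  have c1 := congrArg QuaternionAlgebra.imI e2
  have c2 := congrArg QuaternionAlgebra.imJ e2
  have c3 := congrArg QuaternionAlgebra.imK e2
  have d0 := congrArg QuaternionAlgebra.re e3
  have d1 := congrArg QuaternionAlgebra.imI e3
  have d2 := congrArg QuaternionAlgebra.imJ e3
  have d3 := congrArg QuaternionAlgebra.imK e3
  simp at a0 a1 a2 a3 b0 b1 b2 b3 c0 c1 c2 c3 d0 d1 d2 d3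
  intro i
  fin_cases i <;> ext <;> simp <;> linarith

/-- The family (id, I, J, K) is a basis of the left ℍ-module of ℝ-linear endomorphisms
of ℍ, where `(a • f) x = a * f x`. -/
theorem stmt14 :
    ∃ b : Module.Basis (Fin 4) ℍ[ℝ] (ℍ[ℝ] →ₗ[ℝ] ℍ[ℝ]),
      ⇑b = ![LinearMap.id, Imap, Jmap, Kmap] := by
  refine ⟨Module.Basis.mk indep ?_, Module.Basis.coe_mk _ _⟩
  intro f _
  rw [decomp_s14 f]
  refine add_mem (add_mem (add_mem ?_ ?_) ?_) ?_
  · exact Submodule.smul_mem _ _ (Submodule.subset_span ⟨0, rfl⟩)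
  · exact Submodule.smul_mem _ _ (Submodule.subset_span ⟨1, rfl⟩)
  · exact Submodule.smul_mem _ _ (Submodule.subset_span ⟨2, rfl⟩)
  · exact Submodule.smul_mem _ _ (Submodule.subset_span ⟨3, rfl⟩)
end
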